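/- Let 0 < H ≤ 1/2 and R(s,t) = (1/2)(s^{2H} + t^{2H} - |s-t|^{2H}). For fixed 0 ≤ s < t, the total variation of the function u ↦ R(t,u) - R(s,u) on [0,∞) is at most 3(t-s)^{2H}, and its supremum norm on [0,∞) is at most 3(t-s)^{2H}. -/

import Mathlib

/-- Covariance function of fractional Brownian motion with Hurst parameter `H`. -/
noncomputable def fbmCov (H s t : ℝ) : ℝ :=
  (1/2) * (s ^ (2*H) + t ^ (2*H) - |s - t| ^ (2*H))

lemma rpow_concave_shift {α a b c : ℝ} (hα0 : 0 < α) (hα1 : α ≤ 1)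
    (ha : 0 ≤ a) (hab : a ≤ b) (hc : 0 ≤ c) :
    (b + c) ^ α + a ^ α ≤ b ^ α + (a + c) ^ α := by
  rcases eq_or_lt_of_le (show a ≤ b + c by linarith) with h | h
  · rw [show b = a by linarith, show c = 0 by linarith, add_zero]
  · set d := b + c - a with hd
    have hd0 : 0 < d := by rw [hd]; linarith
    have C := Real.concaveOn_rpow hα0.le hα1
    have key : (b - a) / d + c / d = 1 := by rw [hd]; field_simp; ring
    have h1 := C.2 (Set.mem_Ici.2 ha) (Set.mem_Ici.2 (show (0:ℝ) ≤ b + c by linarith))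
      (div_nonneg (show (0:ℝ) ≤ b - a by linarith) hd0.le) (div_nonneg hc hd0.le) key
    have h2 := C.2 (Set.mem_Ici.2 ha) (Set.mem_Ici.2 (show (0:ℝ) ≤ b + c by linarith))
      (div_nonneg hc hd0.le) (div_nonneg (show (0:ℝ) ≤ b - a by linarith) hd0.le) (by rw [add_comm]; exact key)
    simp only [smul_eq_mul] at h1 h2
    have e1 : (b - a) / d * a + c / d * (b + c) = a + c := by rw [hd]; field_simp; ring
    have e2 : c / d * a + (b - a) / d * (b + c) = b := by rw [hd]; field_simp; ring
    rw [e1] at h1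
    rw [e2] at h2
    calc (b + c) ^ α + a ^ α = ((b - a) / d + c / d) * (a ^ α + (b + c) ^ α) := by
          rw [key]; ring
      _ = ((b - a) / d * a ^ α + c / d * (b + c) ^ α)
          + (c / d * a ^ α + (b - a) / d * (b + c) ^ α) := by ring
      _ ≤ (a + c) ^ α + b ^ α := add_le_add h1 h2
      _ = b ^ α + (a + c) ^ α := by ring

lemma rpow_sub_le_rpow_sub {α a b : ℝ} (hα0 : 0 < α) (hα1 : α ≤ 1)
    (ha : 0 ≤ a) (hab : a ≤ b) :
    b ^ α - a ^ α ≤ (b - a) ^ α := by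
  have h := rpow_concave_shift hα0 hα1 (le_refl (0:ℝ)) (show (0:ℝ) ≤ b - a by linarith) ha
  rw [Real.zero_rpow hα0.ne', zero_add, sub_add_cancel] at h
  linarith

lemma fin_telescope (n : ℕ) (v : Fin (n+1) → ℝ) :
    ∑ i : Fin n, (v i.succ - v i.castSucc) = v (Fin.last n) - v 0 := by
  set g : ℕ → ℝ := fun k => v ⟨min k n, Nat.lt_succ_of_le (min_le_right _ _)⟩ with hg
  calc ∑ i : Fin n, (v i.succ - v i.castSucc)
      = ∑ i : Fin n, ((fun k : ℕ => g (k+1) - g k) (i : ℕ)) := by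
        refine Finset.sum_congr rfl fun i _ => ?_
        have e1 : i.succ = (⟨min ((i:ℕ)+1) n, Nat.lt_succ_of_le (min_le_right _ _)⟩ : Fin (n+1)) := by
          ext; simp [Nat.min_eq_left (Nat.succ_le_of_lt i.isLt)]
        have e2 : i.castSucc = (⟨min (i:ℕ) n, Nat.lt_succ_of_le (min_le_right _ _)⟩ : Fin (n+1)) := by
          ext; simp [Nat.min_eq_left i.isLt.le]
        simp only [hg]
        rw [e1, e2]
    _ = ∑ k ∈ Finset.range n, (g (k+1) - g k) := by exact Fin.sum_univ_eq_sum_range (fun k => g (k+1) - g k) n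
    _ = g n - g 0 := Finset.sum_range_sub g n
    _ = v (Fin.last n) - v 0 := by
        simp only [hg]
        congr 1 <;> apply congrArg <;> ext <;> simp [Fin.last]

/-- For `0 < H ≤ 1/2` and `0 ≤ s < t`, the total variation of
`g : u ↦ R(t,u) - R(s,u)` on `[0,∞)` is at most `3(t-s)^{2H}` (i.e. every
partition sum of increments is bounded by `3(t-s)^{2H}`), and its supremum
norm on `[0,∞)` is at most `3(t-s)^{2H}`. -/
theorem fbmCov_incr_variation_bound (H s t : ℝ) (hH0 : 0 < H) (hH : H ≤ 1/2)
    (hs : 0 ≤ s) (hst : s < t) :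
    (∀ (n : ℕ) (u : Fin (n+1) → ℝ), Monotone u → (∀ i, 0 ≤ u i) →
      ∑ i : Fin n,
        |(fbmCov H t (u i.succ) - fbmCov H s (u i.succ)) -
          (fbmCov H t (u i.castSucc) - fbmCov H s (u i.castSucc))|
        ≤ 3 * (t - s) ^ (2*H)) ∧
    (∀ u : ℝ, 0 ≤ u → |fbmCov H t u - fbmCov H s u| ≤ 3 * (t - s) ^ (2*H)) := by
  set α : ℝ := 2*H with hαdef
  have hα0 : 0 < α := by rw [hαdef]; linarith
  have hα1 : α ≤ 1 := by rw [hαdef]; linarith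
  have ht : 0 < t := lt_of_le_of_lt hs hst
  set X : ℝ := (t - s) ^ α with hXdef
  have hX0 : 0 ≤ X := Real.rpow_nonneg (by linarith) α
  set G : ℝ → ℝ := fun x => fbmCov H t x - fbmCov H s x with hGdef
  have hGrfl : ∀ x : ℝ, fbmCov H t x - fbmCov H s x = G x := fun x => rfl
  clear_value G
  have hG : ∀ x : ℝ, G x = (1/2) * (t ^ α - s ^ α + |s - x| ^ α - |t - x| ^ α) := by
    intro x
    simp only [hGdef, fbmCov]
    rw [hαdef]
    ring
  have hGa : ∀ x, 0 ≤ x → x ≤ s → G x = (1/2) * (t ^ α - s ^ α + (s - x) ^ α - (t - x) ^ α) := by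
    intro x h0 h1; rw [hG x, abs_of_nonneg (by linarith), abs_of_nonneg (by linarith)]
  have hGb : ∀ x, s ≤ x → x ≤ t → G x = (1/2) * (t ^ α - s ^ α + (x - s) ^ α - (t - x) ^ α) := by
    intro x h1 h2; rw [hG x, abs_of_nonpos (by linarith), abs_of_nonneg (by linarith), neg_sub]
  have hGc : ∀ x, t ≤ x → G x = (1/2) * (t ^ α - s ^ α + (x - s) ^ α - (x - t) ^ α) := by
    intro x h1
    rw [hG x, abs_of_nonpos (show s - x ≤ 0 by linarith), abs_of_nonpos (by linarith),
      neg_sub, neg_sub]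
  clear_value α X
  have hG0 : G 0 = 0 := by rw [hGa 0 le_rfl hs, sub_zero, sub_zero]; ring
  have hGs : G s = (1/2) * (t ^ α - s ^ α - X) := by
    rw [hGb s le_rfl hst.le, sub_self, Real.zero_rpow hα0.ne', hXdef]; ring
  have hGt : G t = (1/2) * (t ^ α - s ^ α + X) := by
    rw [hGb t hst.le le_rfl, sub_self, Real.zero_rpow hα0.ne', hXdef]; ring
  have hmono : ∀ a b : ℝ, 0 ≤ a → a ≤ b → a ^ α ≤ b ^ α :=
    fun a b h1 h2 => Real.rpow_le_rpow h1 h2 hα0.le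
  have hts : s ^ α ≤ t ^ α := hmono _ _ hs hst.le
  have htsX : t ^ α - s ^ α ≤ X := by
    rw [hXdef]; exact rpow_sub_le_rpow_sub hα0 hα1 hs hst.le
  have M1 : ∀ x y : ℝ, 0 ≤ x → x ≤ y → y ≤ s → G y ≤ G x := by
    intro x y h0 h1 h2
    rw [hGa x h0 (by linarith), hGa y (by linarith) h2]
    have key := rpow_concave_shift hα0 hα1 (show (0:ℝ) ≤ s - y by linarith)
      (show s - y ≤ s - x by linarith) (show (0:ℝ) ≤ t - s by linarith)
    rw [show s - x + (t - s) = t - x by ring, show s - y + (t - s) = t - y by ring] at key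
    linarith
  have M2 : ∀ x y : ℝ, s ≤ x → x ≤ y → y ≤ t → G x ≤ G y := by
    intro x y h1 h2 h3
    rw [hGb x h1 (by linarith), hGb y (by linarith) h3]
    have k1 := hmono (x - s) (y - s) (by linarith) (by linarith)
    have k2 := hmono (t - y) (t - x) (by linarith) (by linarith)
    linarith
  have M3 : ∀ x y : ℝ, t ≤ x → x ≤ y → G y ≤ G x := by
    intro x y h1 h2
    rw [hGc x h1, hGc y (by linarith)]
    have key := rpow_concave_shift hα0 hα1 (show (0:ℝ) ≤ x - t by linarith)
      (show x - t ≤ y - t by linarith) (show (0:ℝ) ≤ t - s by linarith)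
    rw [show y - t + (t - s) = y - s by ring, show x - t + (t - s) = x - s by ring] at key
    linarith
  have hL : ∀ x, t ≤ x → (1/2) * (t ^ α - s ^ α) ≤ G x := by
    intro x h1
    rw [hGc x h1]
    have := hmono (x - t) (x - s) (by linarith) (by linarith)
    linarith
  have hGs_lb : -(1/2) * X ≤ G s := by rw [hGs]; linarith
  have hGt_ub : G t ≤ X := by rw [hGt]; linarith
  constructor
  · -- variation bound
    intro n u humono hu0
    simp only [hGrfl]
    set P : ℝ → ℝ := fun x => G (min (max x s) t) with hPdef
    set Q : ℝ → ℝ := fun x => P x - G x with hQdef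
    have hcl : ∀ x : ℝ, s ≤ min (max x s) t ∧ min (max x s) t ≤ t :=
      fun x => ⟨le_min (le_max_right _ _) hst.le, min_le_right _ _⟩
    have hP1 : ∀ x, x ≤ s → P x = G s := by
      intro x hx; simp only [hPdef]; rw [max_eq_right hx, min_eq_left hst.le]
    have hP2 : ∀ x, s ≤ x → x ≤ t → P x = G x := by
      intro x h1 h2; simp only [hPdef]; rw [max_eq_left h1, min_eq_left h2]
    have hP3 : ∀ x, t ≤ x → P x = G t := by
      intro x h1; simp only [hPdef]; rw [max_eq_left (by linarith), min_eq_right h1]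
    have hPmono : ∀ x y : ℝ, x ≤ y → P x ≤ P y := by
      intro x y hxy
      refine M2 _ _ (hcl x).1 ?_ (hcl y).2
      exact min_le_min (max_le_max hxy le_rfl) le_rfl
    have hPrange : ∀ x : ℝ, G s ≤ P x ∧ P x ≤ G t := fun x =>
      ⟨M2 s _ le_rfl (hcl x).1 (hcl x).2, M2 _ t (hcl x).1 (hcl x).2 le_rfl⟩
    clear_value P Q
    have hQ_ub : ∀ x, 0 ≤ x → Q x ≤ (1/2) * X := by
      intro x h0
      simp only [hQdef]
      rcases le_total x s with h1 | h1
      · rw [hP1 x h1]; linarith [M1 x s h0 h1 le_rfl]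
      · rcases le_total x t with h2 | h2
        · rw [hP2 x h1 h2]; linarith
        · rw [hP3 x h2, hGt]; linarith [hL x h2]
    have hQ_lb : ∀ x, 0 ≤ x → -(1/2) * X ≤ Q x := by
      intro x h0
      simp only [hQdef]
      rcases le_total x s with h1 | h1
      · rw [hP1 x h1]
        have l2 := M1 0 x le_rfl h0 h1
        rw [hG0] at l2
        linarith
      · rcases le_total x t with h2 | h2
        · rw [hP2 x h1 h2]; linarith
        · rw [hP3 x h2]; linarith [M3 t x le_rfl h2]
    have hQmono : ∀ x y : ℝ, 0 ≤ x → x ≤ y → Q x ≤ Q y := by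
      intro x y h0 hxy
      simp only [hQdef]
      rcases le_total t x with h1 | h1
      · rw [hP3 x h1, hP3 y (by linarith)]
        linarith [M3 x y h1 hxy]
      · rcases le_total y s with h2 | h2
        · rw [hP1 x (by linarith), hP1 y h2]
          linarith [M1 x y h0 hxy h2]
        · have hx0 : P x - G x ≤ 0 := by
            rcases le_total x s with h3 | h3
            · rw [hP1 x h3]; linarith [M1 x s h0 h3 le_rfl]
            · rw [hP2 x h3 h1]; linarith
          have hy0 : 0 ≤ P y - G y := by
            rcases le_total y t with h4 | h4
            · rw [hP2 y h2 h4]; linarith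
            · rw [hP3 y h4]; linarith [M3 t y le_rfl h4]
          linarith
    have step : ∀ i : Fin n, |G (u i.succ) - G (u i.castSucc)| ≤
        (P (u i.succ) - P (u i.castSucc)) + (Q (u i.succ) - Q (u i.castSucc)) := by
      intro i
      have hle : u i.castSucc ≤ u i.succ := humono (Fin.castSucc_le_succ i)
      have h1 : P (u i.castSucc) ≤ P (u i.succ) := hPmono _ _ hle
      have h2 : Q (u i.castSucc) ≤ Q (u i.succ) := hQmono _ _ (hu0 _) hle
      have e1 : G (u i.succ) = P (u i.succ) - Q (u i.succ) := by simp only [hQdef]; ring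
      have e2 : G (u i.castSucc) = P (u i.castSucc) - Q (u i.castSucc) := by
        simp only [hQdef]; ring
      rw [e1, e2]
      rw [abs_le]
      constructor <;> linarith
    have tp := fin_telescope n (fun i => P (u i))
    have tq := fin_telescope n (fun i => Q (u i))
    calc ∑ i : Fin n, |G (u i.succ) - G (u i.castSucc)|
        ≤ ∑ i : Fin n, ((P (u i.succ) - P (u i.castSucc)) + (Q (u i.succ) - Q (u i.castSucc))) :=
          Finset.sum_le_sum fun i _ => step i
      _ = (∑ i : Fin n, (P (u i.succ) - P (u i.castSucc)))
          + ∑ i : Fin n, (Q (u i.succ) - Q (u i.castSucc)) := Finset.sum_add_distrib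
      _ = (P (u (Fin.last n)) - P (u 0)) + (Q (u (Fin.last n)) - Q (u 0)) := by rw [tp, tq]
      _ ≤ 3 * X := by
          have p1 := (hPrange (u (Fin.last n))).2
          have p2 := (hPrange (u 0)).1
          have q1 := hQ_ub (u (Fin.last n)) (hu0 _)
          have q2 := hQ_lb (u 0) (hu0 _)
          rw [hGt] at p1; rw [hGs] at p2
          linarith
  · -- sup bound
    intro x h0
    rw [hGrfl, abs_le]
    rcases le_total x s with h1 | h1
    · have l1 := M1 x s h0 h1 le_rfl
      have l2 := M1 0 x le_rfl h0 h1
      rw [hG0] at l2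
      exact ⟨by linarith, by linarith⟩
    · rcases le_total x t with h2 | h2
      · have l1 := M2 s x le_rfl h1 h2
        have l2 := M2 x t h1 h2 le_rfl
        exact ⟨by linarith, by linarith⟩
      · have l1 := hL x h2
        have l2 := M3 t x le_rfl h2
        exact ⟨by linarith, by linarith⟩
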